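/- Let A ⊆ ℝ^{n} be closed convex and M : ℝ^{n} → ℝ^{n} monotone, with SOL(A,M) nonempty. For each t let ε_t > 0 with ε_t ↓ 0, r_t → 0 with r_t/ε_t → 0, and let y(t) be the unique solution of VI((1−r_t)A, M + ε_t·Id), where (1−r_t)A = {x ∈ A : dist(x, ∂A) ≥ r_t}. Assume M is bounded by l on A and that the projection onto (1−r)A satisfies ‖Proj_{(1−r)A} x − x‖ = O(r) for x ∈ A. Then limsup_{t→∞} ‖y(t)‖ ≤ ‖a‖, where a is the least-norm solution of VI(A, M); in particular, the sequence y(t) is bounded. -/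

import Mathlib

open RealInnerProductSpace

/-- `p` is the Euclidean projection of `x` onto `C`. -/
def IsProjOn {n : ℕ} (C : Set (EuclideanSpace ℝ (Fin n))) (x p : EuclideanSpace ℝ (Fin n)) :
    Prop :=
  p ∈ C ∧ ∀ y ∈ C, ‖x - p‖ ≤ ‖x - y‖

lemma aux_quad (s b q e : ℝ) (hs : 0 ≤ s) (hb : 0 ≤ b) (hq : 0 ≤ q) (he : 0 < e)
    (h : e * s ^ 2 ≤ e * (s * b + q ^ 2)) : s ≤ b + q := by
  have h' : s ^ 2 ≤ s * b + q ^ 2 := le_of_mul_le_mul_left h he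
  by_contra hcon
  push_neg at hcon
  nlinarith [h', sq_nonneg (s - q)]

/-- The doubly regularized Tikhonov sequence `y t`, solving `VI((1−r_t)A, M + ε_t·Id)`, satisfies
`limsup ‖y t‖ ≤ ‖a‖` where `a` is the least-norm solution of `VI(A, M)`; in particular it is
bounded. -/
theorem tikhonov_sequence_bounded {n : ℕ}
    (A : Set (EuclideanSpace ℝ (Fin n))) (hAne : A.Nonempty) (hAc : IsClosed A)
    (hAconv : Convex ℝ A)
    (M : EuclideanSpace ℝ (Fin n) → EuclideanSpace ℝ (Fin n))
    (hmono : ∀ x y, 0 ≤ ⟪M x - M y, x - y⟫)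
    (l : ℝ) (hl : ∀ x ∈ A, ‖M x‖ ≤ l)
    (ε r : ℕ → ℝ) (hεpos : ∀ t, 0 < ε t) (hεanti : Antitone ε)
    (hε0 : Filter.Tendsto ε Filter.atTop (nhds 0))
    (hrpos : ∀ t, 0 < r t) (hr0 : Filter.Tendsto r Filter.atTop (nhds 0))
    (hrε : Filter.Tendsto (fun t => r t / ε t) Filter.atTop (nhds 0))
    -- the shrunk sets (1 − r_t)A
    (S : ℕ → Set (EuclideanSpace ℝ (Fin n)))
    (hS : ∀ t, S t = {x ∈ A | r t ≤ Metric.infDist x (frontier A)})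
    -- projection onto the shrunk set moves points of A by at most O(r_t)
    (C : ℝ) (hproj : ∀ t, ∀ x ∈ A, ∀ p, IsProjOn (S t) x p → ‖p - x‖ ≤ C * r t)
    -- y t solves VI((1−r_t)A, M + ε_t Id)
    (y : ℕ → EuclideanSpace ℝ (Fin n)) (hyS : ∀ t, y t ∈ S t)
    (hyVI : ∀ t, ∀ x ∈ S t, 0 ≤ ⟪M (y t) + ε t • y t, x - y t⟫)
    -- a is the least-norm solution of VI(A, M)
    (a : EuclideanSpace ℝ (Fin n)) (haA : a ∈ A)
    (haVI : ∀ x ∈ A, 0 ≤ ⟪M a, x - a⟫)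
    (hamin : ∀ b ∈ A, (∀ x ∈ A, 0 ≤ ⟪M b, x - b⟫) → ‖a‖ ≤ ‖b‖) :
    Filter.limsup (fun t => ‖y t‖) Filter.atTop ≤ ‖a‖ ∧
      Bornology.IsBounded (Set.range y) := by
  -- S t is closed
  have hScl : ∀ t, IsClosed (S t) := by
    intro t
    rw [hS t]
    exact hAc.inter (isClosed_le continuous_const (Metric.continuous_infDist_pt _))
  -- y t ∈ A
  have hyA : ∀ t, y t ∈ A := by
    intro t
    have := hyS t
    rw [hS t] at this
    exact this.1
  -- a projection of a onto S t exists and is C r_t-close to a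
  have hprojA : ∀ t, ∃ p ∈ S t, ‖p - a‖ ≤ C * r t := by
    intro t
    obtain ⟨p, hpS, hpd⟩ := (hScl t).exists_infDist_eq_dist ⟨y t, hyS t⟩ a
    have hIsProj : IsProjOn (S t) a p := by
      refine ⟨hpS, fun z hz => ?_⟩
      rw [← dist_eq_norm, ← dist_eq_norm, ← hpd]
      exact Metric.infDist_le_dist_of_mem hz
    exact ⟨p, hpS, hproj t a haA p hIsProj⟩
  have hl0 : 0 ≤ l := le_trans (norm_nonneg _) (hl a haA)
  have hC0 : 0 ≤ C := by
    obtain ⟨p, _, hp⟩ := hprojA 0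
    nlinarith [norm_nonneg (p - a), hrpos 0]
  -- the key pointwise bound
  have key : ∀ t, ‖y t‖ ≤ ‖a‖ + C * r t + Real.sqrt (l * C * (r t / ε t)) := by
    intro t
    obtain ⟨p, hpS, hppa⟩ := hprojA t
    set q := Real.sqrt (l * C * (r t / ε t)) with hq
    have harg : 0 ≤ l * C * (r t / ε t) :=
      mul_nonneg (mul_nonneg hl0 hC0) (div_nonneg (hrpos t).le (hεpos t).le)
    have hq2 : q ^ 2 = l * C * (r t / ε t) := Real.sq_sqrt harg
    have hεq : ε t * q ^ 2 = l * (C * r t) := by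
      have hne : ε t ≠ 0 := (hεpos t).ne'
      rw [hq2]
      field_simp
    have h1 := hyVI t p hpS
    have h2 := hmono (y t) a
    have h3 := haVI (y t) (hyA t)
    have hMy : ‖M (y t)‖ ≤ l := hl _ (hyA t)
    have hcs1 : ⟪M (y t), p - a⟫ ≤ l * (C * r t) := by
      calc ⟪M (y t), p - a⟫ ≤ ‖M (y t)‖ * ‖p - a‖ := real_inner_le_norm _ _
        _ ≤ l * (C * r t) := mul_le_mul hMy hppa (norm_nonneg _) hl0
    have hcs2 : ⟪y t, a⟫ ≤ ‖y t‖ * ‖a‖ := real_inner_le_norm _ _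
    have hcs3 : ⟪y t, p - a⟫ ≤ ‖y t‖ * (C * r t) := by
      have h4 := real_inner_le_norm (y t) (p - a)
      have h5 : ‖y t‖ * ‖p - a‖ ≤ ‖y t‖ * (C * r t) :=
        mul_le_mul_of_nonneg_left hppa (norm_nonneg _)
      linarith
    have expand : ⟪M (y t) + ε t • y t, p - y t⟫ =
        -⟪M (y t) - M a, y t - a⟫ - ⟪M a, y t - a⟫ + ⟪M (y t), p - a⟫
          + ε t * ⟪y t, p - a⟫ + ε t * ⟪y t, a⟫ - ε t * ‖y t‖ ^ 2 := by
      simp only [inner_add_left, inner_sub_left, inner_sub_right, real_inner_smul_left,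
        real_inner_self_eq_norm_sq]
      ring
    rw [expand] at h1
    have hcs2' : ε t * ⟪y t, a⟫ ≤ ε t * (‖y t‖ * ‖a‖) :=
      mul_le_mul_of_nonneg_left hcs2 (hεpos t).le
    have hcs3' : ε t * ⟪y t, p - a⟫ ≤ ε t * (‖y t‖ * (C * r t)) :=
      mul_le_mul_of_nonneg_left hcs3 (hεpos t).le
    have master : ε t * ‖y t‖ ^ 2 ≤ ε t * (‖y t‖ * (‖a‖ + C * r t) + q ^ 2) := by
      have : ε t * ‖y t‖ ^ 2 ≤ ε t * (‖y t‖ * ‖a‖) + ε t * (‖y t‖ * (C * r t))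
          + l * (C * r t) := by linarith
      nlinarith [this, hεq]
    exact aux_quad (‖y t‖) (‖a‖ + C * r t) q (ε t) (norm_nonneg _)
      (add_nonneg (norm_nonneg a) (mul_nonneg hC0 (hrpos t).le)) (Real.sqrt_nonneg _) (hεpos t) master
  -- the bounding sequence tends to ‖a‖
  have hf : Filter.Tendsto (fun t => ‖a‖ + C * r t + Real.sqrt (l * C * (r t / ε t)))
      Filter.atTop (nhds ‖a‖) := by
    have h1 : Filter.Tendsto (fun t => C * r t) Filter.atTop (nhds 0) := by
      simpa using hr0.const_mul C
    have h2 : Filter.Tendsto (fun t => Real.sqrt (l * C * (r t / ε t)))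
        Filter.atTop (nhds 0) := by
      have := (hrε.const_mul (l * C)).sqrt
      simpa using this
    have h3 : Filter.Tendsto (fun t => ‖a‖ + C * r t + Real.sqrt (l * C * (r t / ε t)))
        Filter.atTop (nhds (‖a‖ + 0 + 0)) :=
      ((tendsto_const_nhds (x := ‖a‖)).add h1).add h2
    simpa using h3
  constructor
  · have hb1 : Filter.IsBoundedUnder (· ≤ ·) Filter.atTop
        (fun t => ‖a‖ + C * r t + Real.sqrt (l * C * (r t / ε t))) :=
      hf.isBoundedUnder_le
    have hb2 : Filter.IsCoboundedUnder (· ≤ ·) Filter.atTop (fun t => ‖y t‖) := by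
      have : Filter.IsBoundedUnder (· ≥ ·) Filter.atTop (fun t => ‖y t‖) :=
        Filter.isBoundedUnder_of ⟨0, fun t => norm_nonneg _⟩
      exact this.isCoboundedUnder_le
    calc Filter.limsup (fun t => ‖y t‖) Filter.atTop
        ≤ Filter.limsup (fun t => ‖a‖ + C * r t + Real.sqrt (l * C * (r t / ε t)))
          Filter.atTop := Filter.limsup_le_limsup (Filter.Eventually.of_forall key) hb2 hb1
      _ = ‖a‖ := hf.limsup_eq
  · obtain ⟨B, hB⟩ := hf.bddAbove_range
    rw [isBounded_iff_forall_norm_le]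
    refine ⟨B, ?_⟩
    rintro x ⟨t, rfl⟩
    exact (key t).trans (hB ⟨t, rfl⟩)
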